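/- In the completion setup, the group H = UniformSpace.Completion L (the Hausdorff completion of the subgroup L generated by Δ, with respect to the autocorrelation pseudometric ρ) is a locally compact topological space. -/

import Mathlib

open scoped Pointwise

/-- A function `η : G → ℂ` on an additive abelian group is positive definite if all the
finite double sums `∑ i, ∑ j, c i * conj (c j) * η (x i - x j)` are nonnegative reals. -/
def IsPositiveDefiniteFn {G : Type*} [AddCommGroup G] (η : G → ℂ) : Prop :=
  ∀ (N : ℕ) (x : Fin N → G) (c : Fin N → ℂ),
    ∃ r : ℝ, 0 ≤ r ∧ ∑ i, ∑ j, c i * (starRingEnd ℂ) (c j) * η (x i - x j) = (r : ℂ)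

/-- The autocorrelation pseudometric `ρ(s,t) = |1 − η(s−t)/η(0)|^{1/2}`. -/
noncomputable def acRho {G : Type*} [AddCommGroup G] (η : G → ℂ) (s t : G) : ℝ :=
  Real.sqrt ‖1 - η (s - t) / η 0‖

/-- The set of `ε`-almost periods `P_ε = {t : ρ(t,0) < ε}`. -/
noncomputable def almostPeriods {G : Type*} [AddCommGroup G] (η : G → ℂ) (ε : ℝ) : Set G :=
  {t : G | acRho η t 0 < ε}

/-- A subset `P` of a topological abelian group is relatively dense if `P + K = G`
for some compact `K`. -/
def RelativelyDense {G : Type*} [AddCommGroup G] [TopologicalSpace G] (P : Set G) : Prop :=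
  ∃ K : Set G, IsCompact K ∧ P + K = Set.univ

/-- In the completion setup for a pure point autocorrelation, the Hausdorff completion `H`
of the subgroup `L` generated by the support of `η`, taken with respect to the
autocorrelation pseudometric, is locally compact. -/
theorem completion_locallyCompact {G : Type*} [AddCommGroup G] [TopologicalSpace G]
    [IsTopologicalAddGroup G] [LocallyCompactSpace G] [T2Space G] [SigmaCompactSpace G]
    (η : G → ℂ) (hpd : IsPositiveDefiniteFn η) (hη0 : 0 < (η 0).re)
    (hclosed : IsClosed {z : G | η z ≠ 0}) (hdiscrete : DiscreteTopology {z : G | η z ≠ 0})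
    (hdense : ∀ ε : ℝ, 0 < ε → RelativelyDense (almostPeriods η ε))
    [PseudoMetricSpace ↥(AddSubgroup.closure {z : G | η z ≠ 0})]
    (hdist : ∀ s t : ↥(AddSubgroup.closure {z : G | η z ≠ 0}),
      dist s t = acRho η (s : G) (t : G)) :
    LocallyCompactSpace
      (UniformSpace.Completion ↥(AddSubgroup.closure {z : G | η z ≠ 0})) := by
  -- basic facts about acRho
  have hA : ∀ z : G, η z = 0 → acRho η z 0 = 1 := by
    intro z hz
    simp [acRho, hz]
  have hA' : ∀ z : G, acRho η z 0 < 1 → η z ≠ 0 := by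
    intro z h hz
    rw [hA z hz] at h
    exact lt_irrefl _ h
  have hΔL : ∀ z : G, η z ≠ 0 → z ∈ AddSubgroup.closure {z : G | η z ≠ 0} :=
    fun z hz => AddSubgroup.subset_closure hz
  have hd : ∀ s t : ↥(AddSubgroup.closure {z : G | η z ≠ 0}),
      dist s t = acRho η ((s : G) - t) 0 := by
    intro s t
    rw [hdist]
    simp [acRho]
  -- translation invariance
  have hshift : ∀ a b u : ↥(AddSubgroup.closure {z : G | η z ≠ 0}),
      dist (a + u) (b + u) = dist a b := by
    intro a b u
    rw [hd, hd]
    have e : ((a + u : ↥(AddSubgroup.closure {z : G | η z ≠ 0})) : G) - ((b + u :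
        ↥(AddSubgroup.closure {z : G | η z ≠ 0})) : G) = (a : G) - b := by
      push_cast
      abel
    rw [e]
  -- total boundedness of the ball of radius 1/2 around 0
  have hTB : TotallyBounded (Metric.ball (0 : ↥(AddSubgroup.closure {z : G | η z ≠ 0})) 2⁻¹) := by
    rw [Metric.totallyBounded_iff]
    intro ε hε
    set δ := min ε 2⁻¹ with hδdef
    have hδ0 : 0 < δ := lt_min hε (by norm_num)
    have hδhalf : δ ≤ 2⁻¹ := min_le_right _ _
    obtain ⟨K, hKc, hKcov⟩ := hdense δ hδ0
    have hfin : ({z : G | η z ≠ 0} ∩ K).Finite := by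
      have hcomp : IsCompact ({z : G | η z ≠ 0} ∩ K) := hKc.inter_left hclosed
      have hdisc : DiscreteTopology ↥({z : G | η z ≠ 0} ∩ K) :=
        DiscreteTopology.of_subset hdiscrete Set.inter_subset_left
      exact hcomp.finite (isDiscrete_iff_discreteTopology.mpr hdisc)
    refine ⟨(Subtype.val : ↥(AddSubgroup.closure {z : G | η z ≠ 0}) → G) ⁻¹'
        ({z : G | η z ≠ 0} ∩ K),
      hfin.preimage (Set.injOn_of_injective Subtype.val_injective), ?_⟩
    intro t ht
    have ht0 : dist t (0 : ↥(AddSubgroup.closure {z : G | η z ≠ 0})) < 2⁻¹ := by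
      simpa [Metric.mem_ball] using ht
    have htG : (t : G) ∈ almostPeriods η δ + K := by rw [hKcov]; trivial
    obtain ⟨p, hp, k, hk, hpk⟩ := htG
    have hpρ : acRho η p 0 < δ := hp
    have hpΔ : η p ≠ 0 := hA' p (lt_of_lt_of_le hpρ (le_trans hδhalf (by norm_num)))
    set pL : ↥(AddSubgroup.closure {z : G | η z ≠ 0}) := ⟨p, hΔL p hpΔ⟩ with hpLdef
    have hppL : dist pL 0 < δ := by
      rw [hd]
      simpa using hpρ
    have hdtp : dist t pL < 2⁻¹ + δ := by
      calc dist t pL ≤ dist t 0 + dist (0 : ↥(AddSubgroup.closure {z : G | η z ≠ 0})) pL :=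
            dist_triangle _ _ _
        _ = dist t 0 + dist pL 0 := by rw [dist_comm (0 : _) pL]
        _ < 2⁻¹ + δ := add_lt_add ht0 hppL
    have hkΔ : η ((t : G) - p) ≠ 0 := by
      apply hA'
      have e : acRho η ((t : G) - p) 0 = dist t pL := (hd t pL).symm
      rw [e]
      have h1 : (2 : ℝ)⁻¹ + δ ≤ 1 := by
        have := hδhalf
        norm_num at this ⊢
        linarith
      exact lt_of_lt_of_le hdtp h1
    have hkeq : (t : G) - p = k := by
      have : p + k = (t : G) := hpk
      rw [← this, add_sub_cancel_left]
    refine Set.mem_iUnion₂.2 ⟨t - pL, ?_, ?_⟩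
    · constructor
      · show η ((t : G) - p) ≠ 0
        exact hkΔ
      · show ((t : G) - p) ∈ K
        rw [hkeq]; exact hk
    · rw [Metric.mem_ball, hd]
      have e : (t : G) - ((t - pL : ↥(AddSubgroup.closure {z : G | η z ≠ 0})) : G) = p := by
        push_cast
        abel
      rw [e]
      exact lt_of_lt_of_le hpρ (min_le_left _ _)
  -- total boundedness of every ball of radius 1/2
  have hiso : ∀ u : ↥(AddSubgroup.closure {z : G | η z ≠ 0}),
      Isometry (fun x : ↥(AddSubgroup.closure {z : G | η z ≠ 0}) => x + u) :=
    fun u => Isometry.of_dist_eq (fun a b => hshift a b u)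
  have hTBt : ∀ t0 : ↥(AddSubgroup.closure {z : G | η z ≠ 0}),
      TotallyBounded (Metric.ball t0 2⁻¹) := by
    intro t0
    have heq : Metric.ball t0 (2⁻¹ : ℝ) =
        (fun x : ↥(AddSubgroup.closure {z : G | η z ≠ 0}) => x + t0) '' Metric.ball 0 2⁻¹ := by
      ext x
      simp only [Set.mem_image, Metric.mem_ball]
      constructor
      · intro hx
        refine ⟨x - t0, ?_, sub_add_cancel x t0⟩
        have h1 := hshift (x - t0) 0 t0
        rw [sub_add_cancel, zero_add] at h1
        rw [← h1]; exact hx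
      · rintro ⟨y, hy, rfl⟩
        have h1 := hshift y 0 t0
        rw [zero_add] at h1
        rw [h1]; exact hy
    rw [heq]
    exact hTB.image (hiso t0).uniformContinuous
  -- move to the completion
  have hcd : ∀ a b : ↥(AddSubgroup.closure {z : G | η z ≠ 0}),
      dist (a : UniformSpace.Completion ↥(AddSubgroup.closure {z : G | η z ≠ 0})) b = dist a b :=
    fun a b => UniformSpace.Completion.dist_eq a b
  have hdenseH : DenseRange ((↑) : ↥(AddSubgroup.closure {z : G | η z ≠ 0}) →
      UniformSpace.Completion ↥(AddSubgroup.closure {z : G | η z ≠ 0})) :=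
    UniformSpace.Completion.denseRange_coe
  haveI : WeaklyLocallyCompactSpace
      (UniformSpace.Completion ↥(AddSubgroup.closure {z : G | η z ≠ 0})) := by
    constructor
    intro h
    obtain ⟨y, ⟨t0, rfl⟩, ht0⟩ :=
      (Metric.mem_closure_iff.1 (hdenseH h)) (8⁻¹ : ℝ) (by norm_num)
    refine ⟨closure (((↑) : ↥(AddSubgroup.closure {z : G | η z ≠ 0}) →
        UniformSpace.Completion ↥(AddSubgroup.closure {z : G | η z ≠ 0})) ''
        Metric.ball t0 2⁻¹), ?_, ?_⟩
    · apply TotallyBounded.isCompact_of_isClosed _ isClosed_closure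
      exact ((hTBt t0).image (UniformSpace.Completion.uniformContinuous_coe _)).closure
    · have hball : Metric.ball h 8⁻¹ ⊆ closure
          (((↑) : ↥(AddSubgroup.closure {z : G | η z ≠ 0}) →
          UniformSpace.Completion ↥(AddSubgroup.closure {z : G | η z ≠ 0})) ''
          Metric.ball t0 2⁻¹) := by
        intro x hx
        have hxh : dist x h < 8⁻¹ := hx
        rw [Metric.mem_closure_iff]
        intro r hr
        obtain ⟨y, ⟨t, rfl⟩, hty⟩ :=
          (Metric.mem_closure_iff.1 (hdenseH x)) (min r (8⁻¹ : ℝ)) (lt_min hr (by norm_num))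
        refine ⟨_, ⟨t, ?_, rfl⟩, lt_of_lt_of_le hty (min_le_left _ _)⟩
        rw [Metric.mem_ball, ← hcd]
        calc dist (t : UniformSpace.Completion ↥(AddSubgroup.closure {z : G | η z ≠ 0}))
              (t0 : UniformSpace.Completion ↥(AddSubgroup.closure {z : G | η z ≠ 0}))
            ≤ dist (↑t) x + dist x h + dist h ↑t0 := dist_triangle4 _ _ _ _
          _ < min r 8⁻¹ + 8⁻¹ + 8⁻¹ := by
              have h1 : dist (t : UniformSpace.Completion
                  ↥(AddSubgroup.closure {z : G | η z ≠ 0})) x < min r 8⁻¹ := by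
                rw [dist_comm]; exact hty
              have h3 : dist h (t0 : UniformSpace.Completion
                  ↥(AddSubgroup.closure {z : G | η z ≠ 0})) < 8⁻¹ := ht0
              exact add_lt_add (add_lt_add h1 hxh) h3
          _ ≤ 8⁻¹ + 8⁻¹ + 8⁻¹ := by
              have := min_le_right r (8⁻¹ : ℝ)
              linarith
          _ < 2⁻¹ := by norm_num
      exact Filter.mem_of_superset (Metric.ball_mem_nhds h (by norm_num)) hball
  infer_instance
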